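/- Let m ≥ 2, let s_1,…,s_m be nonnegative integers with total t = s_1+⋯+s_m, and let l_j, u_j be integers with 0 ≤ l_j ≤ u_j ≤ s_j and l_j + u_j = s_j for each j (symmetric core constraints). For a nonnegative integer n let N(n) = ∑ ∏_{j=1}^m C(s_j, x_j), the sum over all x ∈ ℕ^m with x_1+⋯+x_m = n and l_j ≤ x_j ≤ u_j for all j. Let n* = ⌈t/2⌉. Then for every n with 0 ≤ n ≤ t, N(n)·C(t, n*) ≤ N(n*)·C(t, n); i.e., the symmetric core probability P_n[X ∈ B] = N(n)/C(t,n) is maximized at n = ⌈t/2⌉ (equivalently, at n = ⌊t/2⌋). -/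

import Mathlib

open Polynomial Finset

namespace SymCoreAux

variable {m : ℕ}

noncomputable def fj (s l u : Fin m → ℕ) (j : Fin m) : Polynomial ℕ :=
  ∑ x ∈ Finset.Icc (l j) (u j), Polynomial.C ((s j).choose x) * Polynomial.X ^ x

noncomputable def NP (s l u : Fin m → ℕ) (A : Finset (Fin m)) : Polynomial ℕ :=
  ∏ j ∈ A, fj s l u j

noncomputable def NN (s l u : Fin m → ℕ) (A : Finset (Fin m)) (r : ℕ) : ℕ :=
  (NP s l u A).coeff r

lemma coeff_fj (s l u : Fin m → ℕ) (j : Fin m) (r : ℕ) :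
    (fj s l u j).coeff r = if l j ≤ r ∧ r ≤ u j then (s j).choose r else 0 := by
  rw [fj, finset_sum_coeff]
  simp only [coeff_C_mul, coeff_X_pow, mul_ite, mul_one, mul_zero]
  rw [Finset.sum_ite_eq]
  simp [Finset.mem_Icc]

lemma natkey {s l u : ℕ} (hlu : l ≤ u) (hus : u ≤ s) (hsym : l + u = s) (n : ℕ) :
    (if l ≤ n+1 ∧ n+1 ≤ u then s.choose (n+1) else 0) * (n+1)
      + (if l ≤ n ∧ n ≤ u then s.choose n else 0) * n
      + (if n = u then l * s.choose l else 0)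
    = (if l ≤ n ∧ n ≤ u then s * s.choose n else 0)
      + (if n = l - 1 then l * s.choose l else 0) := by
  have hmain : ∀ k : ℕ, k ≤ s → s.choose (k+1) * (k+1) + s.choose k * k = s * s.choose k := by
    intro k hk
    rw [Nat.choose_succ_right_eq, ← Nat.mul_add, Nat.sub_add_cancel hk, Nat.mul_comm]
  have hcu : s.choose u = s.choose l := by
    rw [show u = s - l by omega]; exact Nat.choose_symm (by omega)
  split_ifs <;> try omega
  all_goals first
    | (have h : n = 0 ∧ l = 0 ∧ s = 0 := by omega
       simp only [h.1, h.2.1, h.2.2]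
       simp)
    | (rw [show l = 0 by omega]; simpa using hmain n (by omega))
    | (simpa using hmain n (by omega))
    | (rw [show n + 1 = l by omega, Nat.mul_comm]; simp)
    | (rw [show n = u by omega, hcu, show s = u + l by omega]; ring)

lemma coeff_derivative_mul_X (p : Polynomial ℕ) (n : ℕ) :
    (derivative p * X).coeff n = p.coeff n * n := by
  cases n with
  | zero => simp [mul_coeff_zero]
  | succ k => rw [coeff_mul_X, coeff_derivative]; simp

lemma polykey (s l u : Fin m → ℕ) (hlu : ∀ j, l j ≤ u j) (hus : ∀ j, u j ≤ s j)
    (hsym : ∀ j, l j + u j = s j) (j : Fin m) :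
    derivative (fj s l u j) + derivative (fj s l u j) * X
        + C (l j * (s j).choose (l j)) * X ^ (u j)
      = (s j) • fj s l u j + C (l j * (s j).choose (l j)) * X ^ (l j - 1) := by
  ext n
  simp only [coeff_add, coeff_derivative, coeff_derivative_mul_X, coeff_C_mul, coeff_X_pow,
    coeff_smul, smul_eq_mul, coeff_fj, mul_ite, mul_one, mul_zero, Nat.cast_id]
  exact natkey (hlu j) (hus j) (hsym j) n

lemma derivative_NP {ι : Type*} [DecidableEq ι] (g : ι → Polynomial ℕ) (A : Finset ι) :
    derivative (∏ j ∈ A, g j) = ∑ j ∈ A, (∏ i ∈ A.erase j, g i) * derivative (g j) := by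
  rw [Finset.prod_eq_multiset_prod, derivative_prod, Finset.sum_eq_multiset_sum]
  congr 1

lemma key2 (s l u : Fin m → ℕ) (hlu : ∀ j, l j ≤ u j) (hus : ∀ j, u j ≤ s j)
    (hsym : ∀ j, l j + u j = s j) (A : Finset (Fin m)) :
    (∑ j ∈ A, s j) • NP s l u A
        + ∑ j ∈ A, C (l j * (s j).choose (l j)) * X ^ (l j - 1) * NP s l u (A.erase j)
      = derivative (NP s l u A) + derivative (NP s l u A) * X
        + ∑ j ∈ A, C (l j * (s j).choose (l j)) * X ^ (u j) * NP s l u (A.erase j) := by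
  simp only [NP]
  calc
    (∑ j ∈ A, s j) • ∏ j ∈ A, fj s l u j
        + ∑ j ∈ A, C (l j * (s j).choose (l j)) * X ^ (l j - 1) * ∏ i ∈ A.erase j, fj s l u i
      = ∑ j ∈ A, ((s j) • fj s l u j + C (l j * (s j).choose (l j)) * X ^ (l j - 1))
            * ∏ i ∈ A.erase j, fj s l u i := by
        simp only [add_mul, Finset.sum_add_distrib]
        congr 1
        rw [Finset.sum_smul]
        exact Finset.sum_congr rfl fun j hj => by
          rw [smul_mul_assoc, Finset.mul_prod_erase A _ hj]
    _ = ∑ j ∈ A, (derivative (fj s l u j) + derivative (fj s l u j) * X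
            + C (l j * (s j).choose (l j)) * X ^ (u j)) * ∏ i ∈ A.erase j, fj s l u i :=
        Finset.sum_congr rfl fun j _ => by rw [polykey s l u hlu hus hsym j]
    _ = derivative (∏ j ∈ A, fj s l u j) + derivative (∏ j ∈ A, fj s l u j) * X
        + ∑ j ∈ A, C (l j * (s j).choose (l j)) * X ^ (u j) * ∏ i ∈ A.erase j, fj s l u i := by
        have hd : derivative (∏ j ∈ A, fj s l u j)
            = ∑ j ∈ A, derivative (fj s l u j) * ∏ i ∈ A.erase j, fj s l u i := by
          rw [derivative_NP]; exact Finset.sum_congr rfl fun j _ => mul_comm _ _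
        simp only [add_mul, Finset.sum_add_distrib, hd, Finset.sum_mul]
        refine congrArg₂ (· + ·) (congrArg₂ (· + ·) rfl ?_) rfl
        exact Finset.sum_congr rfl fun j _ => by ring

lemma key3 (s l u : Fin m → ℕ) (hlu : ∀ j, l j ≤ u j) (hus : ∀ j, u j ≤ s j)
    (hsym : ∀ j, l j + u j = s j) (A : Finset (Fin m)) (n : ℕ) :
    (∑ j ∈ A, s j) * NN s l u A n
        + ∑ j ∈ A, (l j * (s j).choose (l j)) *
            (if l j - 1 ≤ n then NN s l u (A.erase j) (n - (l j - 1)) else 0)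
      = NN s l u A (n+1) * (n+1) + NN s l u A n * n
        + ∑ j ∈ A, (l j * (s j).choose (l j)) *
            (if u j ≤ n then NN s l u (A.erase j) (n - u j) else 0) := by
  have h := congrArg (fun p => Polynomial.coeff p n) (key2 s l u hlu hus hsym A)
  simp only [coeff_add, finset_sum_coeff, coeff_smul, smul_eq_mul, coeff_derivative,
    coeff_derivative_mul_X, mul_assoc, coeff_C_mul, coeff_X_pow_mul', Nat.cast_id] at h
  simpa only [NN, mul_assoc] using h

lemma natDeg_fj (s l u : Fin m → ℕ) (hus : ∀ j, u j ≤ s j) (j : Fin m) :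
    (fj s l u j).natDegree ≤ s j := by
  refine natDegree_le_iff_coeff_eq_zero.2 fun N hN => ?_
  rw [coeff_fj, if_neg]
  have := hus j
  omega

lemma reflect_fj (s l u : Fin m → ℕ) (hus : ∀ j, u j ≤ s j)
    (hsym : ∀ j, l j + u j = s j) (j : Fin m) :
    reflect (s j) (fj s l u j) = fj s l u j := by
  ext i
  rw [coeff_reflect, coeff_fj, coeff_fj]
  rcases le_or_gt i (s j) with hi | hi
  · rw [revAt_le hi]
    have h1 := hsym j
    have h2 := hus j
    by_cases h : l j ≤ i ∧ i ≤ u j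
    · rw [if_pos (by omega : l j ≤ s j - i ∧ s j - i ≤ u j), if_pos h,
        show s j - i = s j - i from rfl, Nat.choose_symm hi]
    · rw [if_neg (by omega), if_neg h]
  · rw [revAt_eq_self_of_lt hi]

lemma reflect_NP (s l u : Fin m → ℕ) (hus : ∀ j, u j ≤ s j)
    (hsym : ∀ j, l j + u j = s j) (A : Finset (Fin m)) :
    reflect (∑ j ∈ A, s j) (NP s l u A) = NP s l u A := by
  induction A using Finset.induction_on with
  | empty => simp [NP]
  | @insert a A h ih =>
      rw [NP, Finset.prod_insert h, Finset.sum_insert h,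
        reflect_mul _ _ (natDeg_fj s l u hus a)
          (le_trans (natDegree_prod_le A _) (Finset.sum_le_sum fun j _ => natDeg_fj s l u hus j)),
        reflect_fj s l u hus hsym a]
      rw [NP] at ih
      rw [ih]

lemma NN_symm (s l u : Fin m → ℕ) (hus : ∀ j, u j ≤ s j)
    (hsym : ∀ j, l j + u j = s j) (A : Finset (Fin m)) (r : ℕ) (hr : r ≤ ∑ j ∈ A, s j) :
    NN s l u A r = NN s l u A ((∑ j ∈ A, s j) - r) := by
  conv_lhs => rw [NN, ← reflect_NP s l u hus hsym A]
  rw [coeff_reflect, revAt_le hr, NN]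

lemma mono_of_step (s l u : Fin m → ℕ) (hus : ∀ j, u j ≤ s j)
    (hsym : ∀ j, l j + u j = s j) (A : Finset (Fin m))
    (hstep : ∀ n, 2*n+1 ≤ ∑ j ∈ A, s j →
      (∑ j ∈ A, s j) * NN s l u A n ≤ NN s l u A (n+1) * (n+1) + NN s l u A n * n) :
    ∀ a b, a ≤ b → a + b ≤ ∑ j ∈ A, s j → NN s l u A a ≤ NN s l u A b := by
  have mono' : ∀ b a, a ≤ b → 2*b ≤ ∑ j ∈ A, s j → NN s l u A a ≤ NN s l u A b := by
    intro b
    induction b with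
    | zero => intro a ha _; rw [Nat.le_zero.mp ha]
    | succ k ih =>
        intro a ha hb
        rcases Nat.eq_or_lt_of_le ha with rfl | ha'
        · exact le_rfl
        · have h1 : NN s l u A a ≤ NN s l u A k := ih a (by omega) (by omega)
          have h2 := hstep k (by omega)
          have h3 : NN s l u A k * (k+1) + NN s l u A k * k
              ≤ NN s l u A (k+1) * (k+1) + NN s l u A k * k := by
            calc NN s l u A k * (k+1) + NN s l u A k * k
                = NN s l u A k * (2*k+1) := by ring
              _ ≤ NN s l u A k * (∑ j ∈ A, s j) := Nat.mul_le_mul_left _ (by omega)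
              _ = (∑ j ∈ A, s j) * NN s l u A k := Nat.mul_comm _ _
              _ ≤ _ := h2
          have h4 : NN s l u A k * (k+1) ≤ NN s l u A (k+1) * (k+1) :=
            le_of_add_le_add_right h3
          exact le_trans h1 (Nat.le_of_mul_le_mul_right h4 (Nat.succ_pos k))
  intro a b hab habT
  rcases le_or_gt (2*b) (∑ j ∈ A, s j) with hb | hb
  · exact mono' b a hab hb
  · rw [NN_symm s l u hus hsym A b (by omega)]
    exact mono' _ a (by omega) (by omega)

lemma step (s l u : Fin m → ℕ) (hlu : ∀ j, l j ≤ u j) (hus : ∀ j, u j ≤ s j)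
    (hsym : ∀ j, l j + u j = s j) (A : Finset (Fin m)) :
    ∀ n, 2*n+1 ≤ ∑ j ∈ A, s j →
      (∑ j ∈ A, s j) * NN s l u A n ≤ NN s l u A (n+1) * (n+1) + NN s l u A n * n := by
  induction A using Finset.strongInductionOn with
  | _ A ih =>
    intro n hn
    have hkey := key3 s l u hlu hus hsym A n
    have hb : ∑ j ∈ A, (l j * (s j).choose (l j)) *
          (if u j ≤ n then NN s l u (A.erase j) (n - u j) else 0)
        ≤ ∑ j ∈ A, (l j * (s j).choose (l j)) *
          (if l j - 1 ≤ n then NN s l u (A.erase j) (n - (l j - 1)) else 0) := by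
      refine Finset.sum_le_sum fun j hj => ?_
      rcases Nat.eq_zero_or_pos (l j) with hl0 | hl1
      · simp [hl0]
      have hTe : (∑ i ∈ A.erase j, s i) + s j = ∑ i ∈ A, s i := Finset.sum_erase_add A s hj
      have hsj := hsym j
      have hlj := hlu j
      split_ifs with h1 h2
      · refine Nat.mul_le_mul_left _ ?_
        refine mono_of_step s l u hus hsym (A.erase j)
          (fun r hr => ih (A.erase j) (Finset.erase_ssubset hj) r hr) _ _ (by omega) (by omega)
      · exfalso; omega
      · exact Nat.zero_le _
      · exact Nat.zero_le _
    have hle : (∑ j ∈ A, s j) * NN s l u A n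
          + ∑ j ∈ A, (l j * (s j).choose (l j)) *
            (if u j ≤ n then NN s l u (A.erase j) (n - u j) else 0)
        ≤ NN s l u A (n+1) * (n+1) + NN s l u A n * n
          + ∑ j ∈ A, (l j * (s j).choose (l j)) *
            (if u j ≤ n then NN s l u (A.erase j) (n - u j) else 0) := by
      calc _ ≤ (∑ j ∈ A, s j) * NN s l u A n
          + ∑ j ∈ A, (l j * (s j).choose (l j)) *
            (if l j - 1 ≤ n then NN s l u (A.erase j) (n - (l j - 1)) else 0) :=
            Nat.add_le_add_left hb _
        _ = _ := hkey
    exact le_of_add_le_add_right hle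

lemma chain (s l u : Fin m → ℕ) (hlu : ∀ j, l j ≤ u j) (hus : ∀ j, u j ≤ s j)
    (hsym : ∀ j, l j + u j = s j) :
    ∀ b n, n ≤ b → 2*b ≤ (∑ j, s j) + 1 →
      NN s l u univ n * (∑ j, s j).choose b ≤ NN s l u univ b * (∑ j, s j).choose n := by
  intro b
  induction b with
  | zero => intro n hn _; rw [Nat.le_zero.mp hn]
  | succ k ih =>
      intro n hn hb
      rcases Nat.eq_or_lt_of_le hn with rfl | hn'
      · exact le_rfl
      · have h1 := ih n (by omega) (by omega)
        have h2 := step s l u hlu hus hsym univ k (by omega)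
        have hkT : k ≤ ∑ j, s j := by omega
        have h3 : ((∑ j, s j) - k) * NN s l u univ k ≤ NN s l u univ (k+1) * (k+1) := by
          have hsplit : ((∑ j, s j) - k) * NN s l u univ k + NN s l u univ k * k
              = (∑ j, s j) * NN s l u univ k := by
            rw [mul_comm (NN s l u univ k) k, ← Nat.add_mul, Nat.sub_add_cancel hkT]
          exact le_of_add_le_add_right (hsplit ▸ h2)
        have h4 : NN s l u univ n * (∑ j, s j).choose (k+1) * (k+1)
            ≤ NN s l u univ (k+1) * (∑ j, s j).choose n * (k+1) := by
          calc NN s l u univ n * (∑ j, s j).choose (k+1) * (k+1)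
              = NN s l u univ n * ((∑ j, s j).choose (k+1) * (k+1)) := mul_assoc _ _ _
            _ = NN s l u univ n * ((∑ j, s j).choose k * ((∑ j, s j) - k)) := by
                rw [Nat.choose_succ_right_eq]
            _ = NN s l u univ n * (∑ j, s j).choose k * ((∑ j, s j) - k) := (mul_assoc _ _ _).symm
            _ ≤ NN s l u univ k * (∑ j, s j).choose n * ((∑ j, s j) - k) :=
                Nat.mul_le_mul_right _ h1
            _ = ((∑ j, s j) - k) * NN s l u univ k * (∑ j, s j).choose n := by ring
            _ ≤ NN s l u univ (k+1) * (k+1) * (∑ j, s j).choose n :=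
                Nat.mul_le_mul_right _ h3
            _ = NN s l u univ (k+1) * (∑ j, s j).choose n * (k+1) := by ring
        exact Nat.le_of_mul_le_mul_right h4 (Nat.succ_pos k)

lemma NN_univ_eq (s l u : Fin m → ℕ) (n : ℕ) :
    NN s l u Finset.univ n = ∑ x ∈ (Fintype.piFinset fun j => Finset.Icc (l j) (u j)).filter
        (fun x => ∑ j, x j = n), ∏ j, (s j).choose (x j) := by
  classical
  have h1 : NN s l u Finset.univ n
      = ∑ d ∈ Finset.finsuppAntidiag (Finset.univ : Finset (Fin m)) n,
          ∏ j, (fj s l u j).coeff (d j) := by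
    have hcoe := map_prod Polynomial.coeToPowerSeries.ringHom (fj s l u)
      (Finset.univ : Finset (Fin m))
    simp only [Polynomial.coeToPowerSeries.ringHom_apply] at hcoe
    rw [NN, NP, ← Polynomial.coeff_coe, hcoe, PowerSeries.coeff_prod]
    exact Finset.sum_congr rfl fun d _ => Finset.prod_congr rfl fun j _ =>
      Polynomial.coeff_coe _ _
  rw [h1]
  have h2 : ∀ d : Fin m →₀ ℕ, (∏ j, (fj s l u j).coeff (d j))
      = if (∀ j, l j ≤ d j ∧ d j ≤ u j) then ∏ j, (s j).choose (d j) else 0 := by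
    intro d
    split_ifs with h
    · exact Finset.prod_congr rfl fun j _ => by rw [coeff_fj, if_pos (h j)]
    · obtain ⟨j, hj⟩ := not_forall.mp h
      exact Finset.prod_eq_zero (Finset.mem_univ j) (by rw [coeff_fj, if_neg hj])
  simp_rw [h2]
  rw [← Finset.sum_filter]
  refine Finset.sum_nbij' (fun d => ⇑d) (fun x => Finsupp.equivFunOnFinite.symm x)
    ?_ ?_ ?_ ?_ ?_
  · intro d hd
    simp only [Finset.mem_filter, Finset.mem_finsuppAntidiag] at hd
    simp only [Finset.mem_filter, Fintype.mem_piFinset, Finset.mem_Icc]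
    exact ⟨fun j => hd.2 j, hd.1.1⟩
  · intro x hx
    simp only [Finset.mem_filter, Fintype.mem_piFinset, Finset.mem_Icc] at hx
    simp only [Finset.mem_filter, Finset.mem_finsuppAntidiag]
    refine ⟨⟨?_, Finset.subset_univ _⟩, ?_⟩
    · exact hx.2
    · intro j; exact hx.1 j
  · intro d hd; exact Finsupp.equivFunOnFinite_symm_coe d
  · intro x hx; rfl
  · intro d hd; rfl

end SymCoreAux

theorem symmetric_core_max_at_half (m : ℕ) (hm : 2 ≤ m) (s l u : Fin m → ℕ)
    (hlu : ∀ j, l j ≤ u j) (hus : ∀ j, u j ≤ s j)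
    (hsym : ∀ j, l j + u j = s j)
    (t : ℕ) (ht : t = ∑ j, s j)
    (N : ℕ → ℕ)
    (hN : ∀ r, N r = ∑ x ∈ (Fintype.piFinset fun j => Finset.Icc (l j) (u j)).filter
        (fun x => ∑ j, x j = r), ∏ j, (s j).choose (x j))
    (nstar : ℕ) (hstar : nstar = (t + 1) / 2)
    (n : ℕ) (hn : n ≤ t) :
    N n * t.choose nstar ≤ N nstar * t.choose n := by
  have hNN : ∀ r, N r = SymCoreAux.NN s l u Finset.univ r := fun r => by
    rw [hN r, SymCoreAux.NN_univ_eq]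
  subst ht
  have hstar2 : 2 * nstar ≤ (∑ j, s j) + 1 := by omega
  rcases le_or_gt n nstar with hns | hns
  · rw [hNN n, hNN nstar]
    exact SymCoreAux.chain s l u hlu hus hsym nstar n hns hstar2
  · have hsymm := SymCoreAux.NN_symm s l u hus hsym Finset.univ n hn
    have hcs : (∑ j, s j).choose ((∑ j, s j) - n) = (∑ j, s j).choose n := Nat.choose_symm hn
    rw [hNN n, hNN nstar, hsymm, ← hcs]
    exact SymCoreAux.chain s l u hlu hus hsym nstar _ (by omega) hstar2
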